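/- Let q be a prime power, let ℓ be a divisor of q−1, let f be an r-th order cyclotomic mapping of index ℓ on F_q with 1 ≤ r ≤ q−1 and coefficients a_0, …, a_{ℓ−1} ∈ F_q^* which is a permutation of F_q, and let α, β, γ, δ ∈ F_q with α ≠ 0 or δ ≠ 0. Then the number of c ∈ F_q^* with γc + δ ≠ 0 and f(c) = (αc + β)/(γc + δ) is at most (q−r)·ℓ. -/

import Mathlib

open Polynomial Finset

/-- The Carlitz composition `P_n` over a field with `q` elements, built from
the constants `c 0, c 1, …, c (n+1)`:
`P_n(x) = (⋯((c_0 x + c_1)^{q-2} + c_2)^{q-2} ⋯ + c_n)^{q-2} + c_{n+1}`. -/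
def carlitzAux {F : Type*} [Field F] (q : ℕ) (c : ℕ → F) : ℕ → F → F
  | 0 => fun x => c 0 * x + c 1
  | n + 1 => fun x => (carlitzAux q c n x) ^ (q - 2) + c (n + 2)

/-- `f` agrees (as a map) with a Carlitz composition `P_n` with `n` inversions,
where `c 0 ≠ 0` and `c i ≠ 0` for `2 ≤ i ≤ n`. -/
def IsCarlitzForm {F : Type*} [Field F] [Fintype F] (f : F → F) (n : ℕ) : Prop :=
  ∃ c : ℕ → F, c 0 ≠ 0 ∧ (∀ i, 2 ≤ i → i ≤ n → c i ≠ 0) ∧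
    ∀ x, f x = carlitzAux (Fintype.card F) c n x

/-- The Carlitz rank of a map `f`: the smallest `n` such that `f` agrees with a
Carlitz composition `P_n`. -/
noncomputable def carlitzRank {F : Type*} [Field F] [Fintype F] (f : F → F) : ℕ :=
  sInf {n | IsCarlitzForm f n}

/-- `f` is the `r`-th order cyclotomic mapping of index `ℓ` with respect to the
primitive element `ξ` and coefficients `a 0, …, a (ℓ-1)`: it maps `0` to `0` and
`x` to `a i * x ^ r` for `x` in the cyclotomic coset `C_i = ξ^i C_0`, where
`C_0` is the set of nonzero `ℓ`-th powers. -/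
def IsCycMap {F : Type*} [Field F] (ℓ r : ℕ) (ξ : F) (a : ℕ → F) (f : F → F) : Prop :=
  f 0 = 0 ∧ (∀ i < ℓ, a i ≠ 0) ∧
    ∀ i < ℓ, ∀ y : F, y ≠ 0 → f (ξ ^ i * y ^ ℓ) = a i * (ξ ^ i * y ^ ℓ) ^ r

/-- The index `Ind(f)` of a map `f` with `f 0 = 0`: the smallest divisor `ℓ` of
`q - 1` such that `f` is an `r`-th order cyclotomic mapping of index `ℓ` for some
positive `r`, some primitive element `ξ` and some nonzero coefficients. -/
noncomputable def cycIndex {F : Type*} [Field F] [Fintype F] (f : F → F) : ℕ :=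
  sInf {ℓ | ℓ ∣ Fintype.card F - 1 ∧ ∃ r, 1 ≤ r ∧ ∃ ξ : F,
    orderOf ξ = Fintype.card F - 1 ∧ ∃ a : ℕ → F, IsCycMap ℓ r ξ a f}

/-- The linearity `L(f) = max_{a ≠ 0} |{c : f c = a c}|`. -/
def linearity {F : Type*} [Field F] [Fintype F] [DecidableEq F] (f : F → F) : ℕ :=
  (Finset.univ.erase (0 : F)).sup
    (fun a => (Finset.univ.filter (fun c => f c = a * c)).card)

/-- The invertibility `I(f) = max_{c ≠ 0} |{x ≠ 0 : f x = c / x}|`. -/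
def invertibility {F : Type*} [Field F] [Fintype F] [DecidableEq F] (f : F → F) : ℕ :=
  (Finset.univ.erase (0 : F)).sup
    (fun c => ((Finset.univ.erase (0 : F)).filter (fun x => f x = c / x)).card)

/-- If `f` is an `r`-th order cyclotomic mapping of index `ℓ ∣ q−1`
(with `1 ≤ r ≤ q−1`) which permutes `F_q`, and `α ≠ 0` or `δ ≠ 0`, then the number of
`c ∈ F_q^*` with `γc+δ ≠ 0` and `f(c) = (αc+β)/(γc+δ)` is at most `(q−r)·ℓ`. -/
theorem stmt6 {F : Type*} [Field F] [Fintype F] [DecidableEq F]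
    (ℓ r : ℕ) (hl : ℓ ∣ Fintype.card F - 1) (hr : 1 ≤ r) (hr' : r ≤ Fintype.card F - 1)
    (ξ : F) (hξ : orderOf ξ = Fintype.card F - 1) (a : ℕ → F) (f : F → F)
    (hcyc : IsCycMap ℓ r ξ a f) (hperm : Function.Bijective f)
    (α β γ δ : F) (h : α ≠ 0 ∨ δ ≠ 0) :
    (((Finset.univ.erase (0 : F)).filter
      (fun c => γ * c + δ ≠ 0 ∧ f c = (α * c + β) / (γ * c + δ))).card)
      ≤ (Fintype.card F - r) * ℓ := by
  classical
  set q := Fintype.card F with hqdef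
  have hq2 : (2:ℕ) ≤ q := Fintype.one_lt_card
  have hl0 : 0 < ℓ := Nat.pos_of_dvd_of_pos hl (by omega)
  obtain ⟨hf0, ha, hcy⟩ := hcyc
  -- every nonzero element lies in some coset
  have hcoset : ∀ c : F, c ≠ 0 → ∃ i < ℓ, ∃ y : F, y ≠ 0 ∧ c = ξ ^ i * y ^ ℓ := by
    intro c hc
    have hξ0 : ξ ≠ 0 := by
      intro h0
      subst h0
      have h1 := pow_orderOf_eq_one (0:F)
      rw [hξ, zero_pow (by omega)] at h1
      exact one_ne_zero h1.symm
    have hk : ∃ k : ℕ, ξ ^ k = c := by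
      set u : Fˣ := Units.mk0 c hc with hu
      set v : Fˣ := Units.mk0 ξ hξ0 with hv
      have hvv : (v : F) = ξ := rfl
      have hov : orderOf v = Nat.card Fˣ := by
        rw [Nat.card_eq_fintype_card, Fintype.card_units, ← hξ, ← hvv, orderOf_units]
      have hmem : u ∈ Subgroup.zpowers v := by
        have := Subgroup.eq_top_of_card_eq (Subgroup.zpowers v) (by rw [Nat.card_zpowers, hov])
        rw [this]; trivial
      rw [← mem_powers_iff_mem_zpowers] at hmem
      obtain ⟨k, hk⟩ := hmem
      exact ⟨k, congrArg Units.val hk⟩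
    obtain ⟨k, hk⟩ := hk
    refine ⟨k % ℓ, Nat.mod_lt _ hl0, ξ ^ (k / ℓ), pow_ne_zero _ hξ0, ?_⟩
    rw [← pow_mul, ← pow_add]
    rw [← hk]
    congr 1
    exact (Nat.mod_add_div' k ℓ).symm
  set S := ((Finset.univ.erase (0 : F)).filter
      (fun c => γ * c + δ ≠ 0 ∧ f c = (α * c + β) / (γ * c + δ))) with hS
  have hsub : S ⊆ (Finset.range ℓ).biUnion
      (fun i => S.filter (fun c => ∃ y : F, y ≠ 0 ∧ c = ξ ^ i * y ^ ℓ)) := by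
    intro c hc
    have hc0 : c ≠ 0 := by
      rw [hS, Finset.mem_filter, Finset.mem_erase] at hc
      exact hc.1.1
    obtain ⟨i, hi, y, hy, hcy'⟩ := hcoset c hc0
    exact Finset.mem_biUnion.mpr ⟨i, Finset.mem_range.mpr hi,
      Finset.mem_filter.mpr ⟨hc, y, hy, hcy'⟩⟩
  refine (Finset.card_le_card hsub).trans ((Finset.card_biUnion_le).trans ?_)
  have hbound : ∀ i ∈ Finset.range ℓ,
      (S.filter (fun c => ∃ y : F, y ≠ 0 ∧ c = ξ ^ i * y ^ ℓ)).card ≤ q - r := by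
    intro i hi
    rw [Finset.mem_range] at hi
    have hai : a i ≠ 0 := ha i hi
    -- the key facts about members
    have hmem : ∀ c ∈ S.filter (fun c => ∃ y : F, y ≠ 0 ∧ c = ξ ^ i * y ^ ℓ),
        c ≠ 0 ∧ γ * c + δ ≠ 0 ∧ f c = a i * c ^ r ∧
          a i * c ^ r * (γ * c + δ) = α * c + β := by
      intro c hc
      rw [Finset.mem_filter, hS, Finset.mem_filter, Finset.mem_erase] at hc
      obtain ⟨⟨⟨hc0, -⟩, hne, heq⟩, y, hy, rfl⟩ := hc
      have hfc : f (ξ ^ i * y ^ ℓ) = a i * (ξ ^ i * y ^ ℓ) ^ r := hcy i hi y hy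
      refine ⟨hc0, hne, hfc, ?_⟩
      rw [hfc] at heq
      field_simp at heq
      rw [heq, mul_comm (ξ ^ i * y ^ ℓ) γ, mul_comm (ξ ^ i * y ^ ℓ) α, div_mul_cancel₀ _ hne]
    rcases Nat.lt_or_ge r (q - 1) with hrlt | hrge
    · -- polynomial argument, s = q - 1 - r ≥ 1
      set s := q - 1 - r with hsdef
      have hs1 : 1 ≤ s := by omega
      set P : F[X] := C α * X ^ (s+1) + C β * X ^ s - C (a i * γ) * X - C (a i * δ)
        with hPdef
      have hP0 : P ≠ 0 := by
        intro hP
        rcases h with hα | hδ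
        · have h1 : P.coeff (s+1) = α := by
            simp only [hPdef, coeff_sub, coeff_add, coeff_C_mul, coeff_X_pow, coeff_X,
              coeff_C]
            split_ifs
            any_goals ring
            any_goals contradiction
            any_goals (exfalso; omega)
          rw [hP, coeff_zero] at h1
          exact hα h1.symm
        · have h1 : P.coeff 0 = -(a i * δ) := by
            simp only [hPdef, coeff_sub, coeff_add, coeff_C_mul, coeff_X_pow, coeff_X,
              coeff_C]
            split_ifs
            any_goals ring
            any_goals contradiction
            any_goals (exfalso; omega)
          rw [hP, coeff_zero] at h1
          exact hai (by
            have := h1.symm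
            have h2 : a i * δ = 0 := by linear_combination -this
            rcases mul_eq_zero.mp h2 with h3 | h3
            · exact h3
            · exact absurd h3 hδ)
      have hsub2 : (S.filter (fun c => ∃ y : F, y ≠ 0 ∧ c = ξ ^ i * y ^ ℓ)) ⊆
          P.roots.toFinset := by
        intro c hc
        obtain ⟨hc0, hne, hfc, hkey⟩ := hmem c hc
        rw [Multiset.mem_toFinset, mem_roots hP0]
        have hc1 : c ^ (q - 1) = 1 := FiniteField.pow_card_sub_one_eq_one c hc0
        have hcs : c ^ r * c ^ s = 1 := by
          rw [← pow_add, (by omega : r + s = q - 1)]; exact hc1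
        show P.eval c = 0
        simp only [hPdef, eval_sub, eval_add, eval_mul, eval_pow, eval_C, eval_X]
        linear_combination (-(c^s)) * hkey + (a i * (γ * c + δ)) * hcs
      calc (S.filter (fun c => ∃ y : F, y ≠ 0 ∧ c = ξ ^ i * y ^ ℓ)).card
          ≤ P.roots.toFinset.card := Finset.card_le_card hsub2
        _ ≤ Multiset.card P.roots := Multiset.toFinset_card_le _
        _ ≤ P.natDegree := P.card_roots'
        _ ≤ s + 1 := by
            rw [hPdef]
            compute_degree
            all_goals omega
        _ = q - r := by omega
    · -- r = q - 1 : f is constant a i on the coset, use injectivity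
      have hreq : r = q - 1 := by omega
      have h1 : q - r = 1 := by omega
      rw [h1]
      apply Finset.card_le_one.mpr
      intro c hc d hd
      obtain ⟨hc0, -, hfc, -⟩ := hmem c hc
      obtain ⟨hd0, -, hfd, -⟩ := hmem d hd
      have hc1 : c ^ r = 1 := by
        rw [hreq]; exact FiniteField.pow_card_sub_one_eq_one c hc0
      have hd1 : d ^ r = 1 := by
        rw [hreq]; exact FiniteField.pow_card_sub_one_eq_one d hd0
      apply hperm.injective
      rw [hfc, hfd, hc1, hd1]
  calc ∑ i ∈ Finset.range ℓ,
        (S.filter (fun c => ∃ y : F, y ≠ 0 ∧ c = ξ ^ i * y ^ ℓ)).card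
      ≤ ∑ _i ∈ Finset.range ℓ, (q - r) := Finset.sum_le_sum hbound
    _ = (q - r) * ℓ := by rw [Finset.sum_const, Finset.card_range, smul_eq_mul, mul_comm]
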